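/- Let {u^ε}_{ε>0} ⊂ H¹(Ω) and suppose that as ε → 0, u^ε ⇀ u, χ_{Ω_ε} u^ε_x ⇀ g₀, and u^ε_y ⇀ g₁, all weakly in L²(Ω). Then u ∈ H¹(Ω) and ∇u = (g₀, g₁)ᵀ. -/

import Mathlib

/- Common infrastructure: the domain Ω = (-1,1)², the fault region S_ε,
   weak derivatives, H¹ membership, vanishing boundary values on the top and
   bottom boundaries (via zero extension), traces on horizontal lines,
   the elastic energies, and weak L² convergence as ε → 0. -/

open MeasureTheory Set Filter Topology

noncomputable section

abbrev Pt := ℝ × ℝ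

/-- The cross-section Ω = (-1,1) × (-1,1). -/
def Om : Set Pt := Ioo (-1 : ℝ) 1 ×ˢ Ioo (-1 : ℝ) 1

/-- The fault region S_ε = (-1,1) × (-ε/2, ε/2). -/
def Sf (ε : ℝ) : Set Pt := Ioo (-1 : ℝ) 1 ×ˢ Ioo (-ε/2) (ε/2)

/-- The elastic region Ω_ε = Ω \ closure S_ε. -/
def OmE (ε : ℝ) : Set Pt := Om \ closure (Sf ε)

/-- The fault line S₀ = (-1,1) × {0}. -/
def S0 : Set Pt := Ioo (-1 : ℝ) 1 ×ˢ ({0} : Set ℝ)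

/-- Ω₀ = Ω \ S₀. -/
def Om0 : Set Pt := Om \ S0

/-- Partial derivative in the first (horizontal) variable of a smooth function. -/
def pdx (φ : Pt → ℝ) (p : Pt) : ℝ := fderiv ℝ φ p (1, 0)

/-- Partial derivative in the second (vertical) variable of a smooth function. -/
def pdy (φ : Pt → ℝ) (p : Pt) : ℝ := fderiv ℝ φ p (0, 1)

/-- Test functions: smooth, compactly supported inside the open set A. -/
def TestOn (A : Set Pt) (φ : Pt → ℝ) : Prop :=
  ContDiff ℝ (⊤ : ℕ∞) φ ∧ HasCompactSupport φ ∧ tsupport φ ⊆ A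

/-- g is the weak x-derivative of u on A. -/
def IsWeakDx (A : Set Pt) (u g : Pt → ℝ) : Prop :=
  ∀ φ : Pt → ℝ, TestOn A φ →
    ∫ p in A, u p * pdx φ p = - ∫ p in A, g p * φ p

/-- g is the weak y-derivative of u on A. -/
def IsWeakDy (A : Set Pt) (u g : Pt → ℝ) : Prop :=
  ∀ φ : Pt → ℝ, TestOn A φ →
    ∫ p in A, u p * pdy φ p = - ∫ p in A, g p * φ p

/-- membership of L²(A). -/
def L2On (A : Set Pt) (f : Pt → ℝ) : Prop := MemLp f 2 (volume.restrict A)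

/-- membership of L²(-1,1). -/
def L2I (f : ℝ → ℝ) : Prop := MemLp f 2 (volume.restrict (Ioo (-1 : ℝ) 1))

/-- (u, ux, uy) is an H¹(A) function together with its weak gradient. -/
def IsH1On (A : Set Pt) (u ux uy : Pt → ℝ) : Prop :=
  L2On A u ∧ L2On A ux ∧ L2On A uy ∧ IsWeakDx A u ux ∧ IsWeakDy A u uy

/-- Extension by zero outside A. -/
def extZ (A : Set Pt) (f : Pt → ℝ) : Pt → ℝ := fun p => open Classical in if p ∈ A then f p else 0

/-- The region A extended through the top and bottom boundaries y = ±1. -/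
def extTB (A : Set Pt) : Set Pt := A ∪ (Ioo (-1 : ℝ) 1 ×ˢ {y : ℝ | 1 < |y|})

/-- u(x,±1) = 0: the zero extension of u across the top and bottom boundaries is
    again an H¹ function (this characterizes vanishing traces at y = ±1). -/
def VanishTB (A : Set Pt) (u ux uy : Pt → ℝ) : Prop :=
  IsWeakDx (extTB A) (extZ A u) (extZ A ux) ∧ IsWeakDy (extTB A) (extZ A u) (extZ A uy)

/-- tr is the trace on the horizontal line y = c of u from the region A ∩ {y > c},
    characterized by the Gauss–Green identity. -/
def IsUpperTrace (A : Set Pt) (u uy : Pt → ℝ) (c : ℝ) (tr : ℝ → ℝ) : Prop :=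
  ∀ φ : Pt → ℝ, ContDiff ℝ (⊤ : ℕ∞) φ → HasCompactSupport φ → tsupport φ ⊆ Om →
    ∫ p in A ∩ {p : Pt | c < p.2}, (u p * pdy φ p + uy p * φ p)
      = - ∫ x in Ioo (-1 : ℝ) 1, tr x * φ (x, c)

/-- tr is the trace on the horizontal line y = c of u from the region A ∩ {y < c}. -/
def IsLowerTrace (A : Set Pt) (u uy : Pt → ℝ) (c : ℝ) (tr : ℝ → ℝ) : Prop :=
  ∀ φ : Pt → ℝ, ContDiff ℝ (⊤ : ℕ∞) φ → HasCompactSupport φ → tsupport φ ⊆ Om →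
    ∫ p in A ∩ {p : Pt | p.2 < c}, (u p * pdy φ p + uy p * φ p)
      = ∫ x in Ioo (-1 : ℝ) 1, tr x * φ (x, c)

/-- Squared H¹(A) norm. -/
def h1nsq (A : Set Pt) (u ux uy : Pt → ℝ) : ℝ :=
  ∫ p in A, ((u p) ^ 2 + (ux p) ^ 2 + (uy p) ^ 2)

/-- The isotropic strain energy density 2W(A) = ℂ(A):A with shear modulus m and
    bulk modulus l, applied to the matrix with rows (a11 a12), (a21 a22). -/
def Wd (m l a11 a12 a21 a22 : ℝ) : ℝ :=
  m * (a11 ^ 2 + a22 ^ 2) + l / 2 * (a11 + a22) ^ 2 + m / 2 * (a12 + a21) ^ 2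

/-- The scaled elastic energy I_ε(u) of a displacement u = (u₁,u₂) with weak
    gradient entries u1x u1y u2x u2y, for given moduli and slip γ = γ(x). -/
def Ieps (mu lam : Pt → ℝ) (γ : ℝ → ℝ) (ε : ℝ) (u1x u1y u2x u2y : Pt → ℝ) : ℝ :=
  (∫ p in OmE ε, Wd (mu p) (lam p) (u1x p) (u1y p) (u2x p) (u2y p))
  + ∫ p in Sf ε, Wd (mu p) (lam p) (u1x p)
      (Real.sqrt ε * u1y p - γ p.1 / Real.sqrt ε) (Real.sqrt ε * u2x p) (u2y p)

/-- The limit energy I(u) where jump is the jump [u₁] across S₀. -/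
def Ilim (mu lam : Pt → ℝ) (γ : ℝ → ℝ) (u1x u1y u2x u2y : Pt → ℝ) (jump : ℝ → ℝ) : ℝ :=
  (∫ p in Om0, Wd (mu p) (lam p) (u1x p) (u1y p) (u2x p) (u2y p))
  + (1 / 2) * ∫ x in Ioo (-1 : ℝ) 1, mu (x, 0) * (jump x - γ x) ^ 2

/-- The filter of ε → 0 with 0 < ε < 1/2. -/
def epsFilter : Filter ℝ := 𝓝[Ioo (0 : ℝ) (1 / 2)] 0

/-- F ε ⇀ f weakly in L²(A) as ε → 0. -/
def WeakL2LimE (A : Set Pt) (F : ℝ → Pt → ℝ) (f : Pt → ℝ) : Prop :=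
  ∀ v : Pt → ℝ, L2On A v →
    Tendsto (fun ε => ∫ p in A, F ε p * v p) epsFilter (𝓝 (∫ p in A, f p * v p))

/-- The inverse φ_ε⁻¹ : Ω₀ → Ω_ε of the piecewise affine map φ_ε. -/
def psiE (ε : ℝ) (p : Pt) : Pt :=
  if 0 < p.2 then (p.1, (1 - ε / 2) * p.2 + ε / 2) else (p.1, (1 - ε / 2) * p.2 - ε / 2)

/-- E_ε(u) = u ∘ φ_ε⁻¹. -/
def Eeps (ε : ℝ) (f : Pt → ℝ) : Pt → ℝ := fun p => f (psiE ε p)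

/-- one-dimensional weak derivative on the interval (a,b). -/
def IsWeakD1 (a b : ℝ) (u g : ℝ → ℝ) : Prop :=
  ∀ φ : ℝ → ℝ, ContDiff ℝ (⊤ : ℕ∞) φ → HasCompactSupport φ → tsupport φ ⊆ Ioo a b →
    ∫ x in Ioo a b, u x * deriv φ x = - ∫ x in Ioo a b, g x * φ x


/-! ### Auxiliary lemmas for the proof -/

lemma OmMeas : MeasurableSet Om := measurableSet_Ioo.prod measurableSet_Ioo

lemma OmFinite : IsFiniteMeasure ((volume : Measure Pt).restrict Om) := by
  constructor
  rw [Measure.restrict_apply_univ]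
  exact ((Metric.isBounded_Ioo (-1:ℝ) 1).prod (Metric.isBounded_Ioo (-1:ℝ) 1)).measure_lt_top

lemma contL2 {φ : Pt → ℝ} (hc : Continuous φ) (hcs : HasCompactSupport φ) : L2On Om φ :=
  hc.memLp_of_hasCompactSupport hcs

lemma epsFilter_neBot : epsFilter.NeBot := by
  have h0 : (0:ℝ) ∈ closure (Ioo (0:ℝ) (1/2)) := by
    rw [closure_Ioo (by norm_num : (0:ℝ) ≠ 1/2)]
    constructor <;> norm_num
  exact mem_closure_iff_nhdsWithin_neBot.mp h0

lemma pdx_cont {φ : Pt → ℝ} (hφ : ContDiff ℝ (⊤:ℕ∞) φ) : Continuous (pdx φ) :=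
  (hφ.continuous_fderiv (by simp)).clm_apply continuous_const

lemma pdy_cont {φ : Pt → ℝ} (hφ : ContDiff ℝ (⊤:ℕ∞) φ) : Continuous (pdy φ) :=
  (hφ.continuous_fderiv (by simp)).clm_apply continuous_const

lemma pdx_cs {φ : Pt → ℝ} (hcs : HasCompactSupport φ) : HasCompactSupport (pdx φ) :=
  (hcs.fderiv ℝ).comp_left (g := fun L : Pt →L[ℝ] ℝ => L (1,0)) rfl

lemma pdy_cs {φ : Pt → ℝ} (hcs : HasCompactSupport φ) : HasCompactSupport (pdy φ) :=
  (hcs.fderiv ℝ).comp_left (g := fun L : Pt →L[ℝ] ℝ => L (0,1)) rfl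

/-- Smooth cutoff vanishing for `|y| ≤ δ` and equal to 1 for `y² ≥ 2δ²`. -/
def chi (δ y : ℝ) : ℝ := Real.smoothTransition ((y^2 - δ^2)/δ^2)

lemma chi_contDiff (δ : ℝ) : ContDiff ℝ (⊤:ℕ∞) (chi δ) :=
  Real.smoothTransition.contDiff.comp (((contDiff_id.pow 2).sub contDiff_const).div_const _)

lemma chi_nonneg (δ y : ℝ) : 0 ≤ chi δ y := Real.smoothTransition.nonneg _

lemma chi_le_one (δ y : ℝ) : chi δ y ≤ 1 := Real.smoothTransition.le_one _

lemma chi_zero {δ y : ℝ} (hδ : 0 < δ) (h : |y| ≤ δ) : chi δ y = 0 := by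
  apply Real.smoothTransition.zero_of_nonpos
  apply div_nonpos_of_nonpos_of_nonneg
  · nlinarith [abs_nonneg y, sq_abs y]
  · positivity

lemma chi_one {δ y : ℝ} (hδ : 0 < δ) (h : 2*δ^2 ≤ y^2) : chi δ y = 1 := by
  apply Real.smoothTransition.one_of_one_le
  rw [le_div_iff₀ (by positivity)]
  linarith

lemma pdx_cutoff {χ : ℝ → ℝ} (hχ : ContDiff ℝ (⊤:ℕ∞) χ) {φ : Pt → ℝ}
    (hφ : ContDiff ℝ (⊤:ℕ∞) φ) (p : Pt) :
    pdx (fun q => χ q.2 * φ q) p = χ p.2 * pdx φ p := by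
  have hχd : HasDerivAt χ (deriv χ p.2) p.2 :=
    ((hχ.differentiable (by simp)) p.2).hasDerivAt
  have h1 : HasFDerivAt (fun q : Pt => χ q.2)
      ((deriv χ p.2) • (ContinuousLinearMap.snd ℝ ℝ ℝ)) p :=
    hχd.comp_hasFDerivAt p hasFDerivAt_snd
  have h2 : HasFDerivAt φ (fderiv ℝ φ p) p :=
    ((hφ.differentiable (by simp)) p).hasFDerivAt
  have h3 := h1.mul h2
  rw [pdx, show (fun q => χ q.2 * φ q) = (fun q : Pt => χ q.2) * φ from rfl, h3.fderiv]
  simp [pdx]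

lemma ae_snd_ne : ∀ᵐ p ∂((volume : Measure Pt).restrict Om), p.2 ≠ 0 := by
  refine ae_restrict_of_ae ?_
  rw [ae_iff]
  have h : {p : Pt | ¬ p.2 ≠ 0} = (univ : Set ℝ) ×ˢ ({0} : Set ℝ) := by
    ext ⟨x,y⟩; simp [eq_comm]
  rw [h, Measure.volume_eq_prod, Measure.prod_prod]
  simp

/-- Dominated convergence for the cutoff sequence. -/
lemma dct_chi {f v : Pt → ℝ} (hf : L2On Om f) (hv : Continuous v) (hvcs : HasCompactSupport v) :
    Tendsto (fun n : ℕ => ∫ p in Om, f p * (chi (1/(n+1)) p.2 * v p)) atTop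
      (𝓝 (∫ p in Om, f p * v p)) := by
  haveI := OmFinite
  obtain ⟨C, hC⟩ := hv.bounded_above_of_compact_support hvcs
  have hfi : Integrable f ((volume : Measure Pt).restrict Om) := hf.integrable (by norm_num)
  apply tendsto_integral_of_dominated_convergence (fun p => ‖f p‖ * C)
  · intro n
    exact hf.aestronglyMeasurable.mul
      (((((chi_contDiff _).continuous).comp continuous_snd).mul hv).aestronglyMeasurable)
  · exact hfi.norm.mul_const C
  · intro n
    refine ae_of_all _ fun p => ?_
    have h1 : |chi (1/(n+1)) p.2 * v p| ≤ C := by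
      rw [abs_mul]
      calc |chi (1/(n+1:ℝ)) p.2| * |v p| ≤ 1 * |v p| := by
            apply mul_le_mul_of_nonneg_right _ (abs_nonneg _)
            rw [abs_of_nonneg (chi_nonneg _ _)]
            exact chi_le_one _ _
        _ = ‖v p‖ := by rw [one_mul]; rfl
        _ ≤ C := hC p
    calc ‖f p * (chi (1/(n+1)) p.2 * v p)‖ = ‖f p‖ * |chi (1/(n+1)) p.2 * v p| := by
          rw [norm_mul]; rfl
      _ ≤ ‖f p‖ * C := mul_le_mul_of_nonneg_left h1 (norm_nonneg _)
  · filter_upwards [ae_snd_ne] with p hp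
    have hpos : (0:ℝ) < |p.2| / 2 := by
      have := abs_pos.mpr hp; linarith
    have hev : ∀ᶠ n : ℕ in atTop, (1:ℝ)/(n+1) < |p.2|/2 :=
      tendsto_one_div_add_atTop_nhds_zero_nat.eventually (gt_mem_nhds hpos)
    refine Tendsto.congr' ?_ tendsto_const_nhds
    filter_upwards [hev] with n hn
    have hδ : (0:ℝ) < 1/(n+1) := by positivity
    have hchi : chi (1/(n+1)) p.2 = 1 := by
      apply chi_one hδ
      nlinarith [sq_abs p.2, abs_nonneg p.2]
    rw [hchi, one_mul]

lemma closure_Sf_subset (ε : ℝ) :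
    closure (Sf ε) ⊆ Icc (-1:ℝ) 1 ×ˢ Icc (-ε/2) (ε/2) := by
  have h : Sf ε ⊆ Icc (-1:ℝ) 1 ×ˢ Icc (-ε/2) (ε/2) :=
    prod_mono Ioo_subset_Icc_self Ioo_subset_Icc_self
  exact closure_minimal h (isClosed_Icc.prod isClosed_Icc)

/-- Lemma 1.2 (3): if u^ε ∈ H¹(Ω) with u^ε ⇀ u, χ_{Ω_ε} u^ε_x ⇀ g₀ and u^ε_y ⇀ g₁
weakly in L²(Ω) as ε → 0, then u ∈ H¹(Ω) with ∇u = (g₀,g₁)ᵀ. -/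
theorem weak_limit_H1_Omega (uf ufx ufy : ℝ → Pt → ℝ)
    (hH1 : ∀ ε ∈ Ioo (0 : ℝ) (1 / 2), IsH1On Om (uf ε) (ufx ε) (ufy ε))
    (u g0 g1 : Pt → ℝ)
    (hu : L2On Om u) (hg0 : L2On Om g0) (hg1 : L2On Om g1)
    (h1 : WeakL2LimE Om uf u)
    (h2 : WeakL2LimE Om (fun ε => (OmE ε).indicator (ufx ε)) g0)
    (h3 : WeakL2LimE Om ufy g1) :
    IsH1On Om u g0 g1 := by
  haveI : epsFilter.NeBot := epsFilter_neBot
  refine ⟨hu, hg0, hg1, ?_, ?_⟩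
  · -- weak x-derivative
    intro φ hφ
    obtain ⟨hφs, hφcs, hφsup⟩ := hφ
    have hφc := hφs.continuous
    have hpdxc : Continuous (pdx φ) := pdx_cont hφs
    have hpdxcs : HasCompactSupport (pdx φ) := pdx_cs hφcs
    have stepB : ∀ δ : ℝ, 0 < δ →
        ∫ p in Om, u p * (chi δ p.2 * pdx φ p) = - ∫ p in Om, g0 p * (chi δ p.2 * φ p) := by
      intro δ hδ
      set ψ : Pt → ℝ := fun q => chi δ q.2 * φ q with hψdef
      have hψs : ContDiff ℝ (⊤:ℕ∞) ψ := (((chi_contDiff δ)).comp contDiff_snd).mul hφs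
      have hsupp : Function.support ψ ⊆ Function.support φ := by
        intro p hp
        simp only [Function.mem_support, hψdef] at hp ⊢
        intro h0
        exact hp (by rw [h0, mul_zero])
      have htsup : tsupport ψ ⊆ tsupport φ := closure_mono hsupp
      have hψcs : HasCompactSupport ψ := hφcs.of_isClosed_subset isClosed_closure htsup
      have hψtest : TestOn Om ψ := ⟨hψs, hψcs, htsup.trans hφsup⟩
      have hψpdx : ∀ p, pdx ψ p = chi δ p.2 * pdx φ p :=
        fun p => pdx_cutoff (chi_contDiff δ) hφs p
      have hψc := hψs.continuous
      have lim1 : Tendsto (fun ε => ∫ p in Om, uf ε p * pdx ψ p) epsFilter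
          (𝓝 (∫ p in Om, u p * pdx ψ p)) :=
        h1 (pdx ψ) (contL2 (pdx_cont hψs) (pdx_cs hψcs))
      have ev : (fun ε => ∫ p in Om, uf ε p * pdx ψ p)
          =ᶠ[epsFilter] (fun ε => - ∫ p in Om, ((OmE ε).indicator (ufx ε)) p * ψ p) := by
        have h2δ : ∀ᶠ ε in epsFilter, ε < 2*δ :=
          (Filter.Tendsto.eventually_lt_const (by linarith) tendsto_id).filter_mono nhdsWithin_le_nhds
        filter_upwards [self_mem_nhdsWithin, h2δ] with ε hε hεδ
        rw [(hH1 ε hε).2.2.2.1 ψ hψtest]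
        congr 1
        apply setIntegral_congr_fun OmMeas
        intro p hp
        show ufx ε p * ψ p = (OmE ε).indicator (ufx ε) p * ψ p
        by_cases hmem : p ∈ OmE ε
        · rw [indicator_of_mem hmem]
        · have hcl : p ∈ closure (Sf ε) := by
            by_contra hnc
            exact hmem ⟨hp, hnc⟩
          have h2 : |p.2| ≤ δ := by
            have := (closure_Sf_subset ε hcl).2
            rw [abs_le]
            constructor
            · have := this.1; linarith [hε.1]
            · have := this.2; linarith [hε.1]
          have hψ0 : ψ p = 0 := by
            simp only [hψdef]
            rw [chi_zero hδ h2, zero_mul]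
          rw [indicator_of_notMem hmem, hψ0, mul_zero, zero_mul]
      have lim2 : Tendsto (fun ε => ∫ p in Om, uf ε p * pdx ψ p) epsFilter
          (𝓝 (- ∫ p in Om, g0 p * ψ p)) :=
        Filter.Tendsto.congr' ev.symm ((h2 ψ (contL2 hψc hψcs)).neg)
      have hkey := tendsto_nhds_unique lim1 lim2
      simp only [hψpdx] at hkey
      exact hkey
    have keyn : ∀ n : ℕ,
        ∫ p in Om, u p * (chi (1/(n+1)) p.2 * pdx φ p)
          = - ∫ p in Om, g0 p * (chi (1/(n+1)) p.2 * φ p) :=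
      fun n => stepB _ (by positivity)
    have limL := dct_chi hu hpdxc hpdxcs
    have limR := dct_chi hg0 hφc hφcs
    exact tendsto_nhds_unique limL ((limR.neg).congr (fun n => (keyn n).symm))
  · -- weak y-derivative
    intro φ hφ
    obtain ⟨hφs, hφcs, hφsup⟩ := hφ
    have lim1 : Tendsto (fun ε => ∫ p in Om, uf ε p * pdy φ p) epsFilter
        (𝓝 (∫ p in Om, u p * pdy φ p)) :=
      h1 (pdy φ) (contL2 (pdy_cont hφs) (pdy_cs hφcs))
    have ev : (fun ε => ∫ p in Om, uf ε p * pdy φ p)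
        =ᶠ[epsFilter] (fun ε => - ∫ p in Om, ufy ε p * φ p) := by
      filter_upwards [self_mem_nhdsWithin] with ε hε
      exact (hH1 ε hε).2.2.2.2 φ ⟨hφs, hφcs, hφsup⟩
    have lim2 : Tendsto (fun ε => ∫ p in Om, uf ε p * pdy φ p) epsFilter
        (𝓝 (- ∫ p in Om, g1 p * φ p)) :=
      Filter.Tendsto.congr' ev.symm ((h3 φ (contL2 hφs.continuous hφcs)).neg)
    exact tendsto_nhds_unique lim1 lim2
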